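/- For every rooted forest M, the subspace H_quot(M) of H* is finite-dimensional (its dimension is at most the number of admissible cuts of M) and is stable under the elimination operator E_A for every rooted forest A: E_A(H_quot(M)) ⊆ H_quot(M). Hence H_quot(M) is a finite-dimensional representation of n_T under the elimination action T·φ := −E_T φ. -/

import Mathlib

open scoped Classical

/-- Concrete (labeled) rooted trees: a root with a list of subtrees. -/
inductive RTree : Type
  | node : List RTree → RTree

/-- Shapes of admissible cuts: at each tree, either the full cut
(everything, including the root, goes to the pruned part `P`), or a choice of
an admissible cut of each child subtree.  A `full` occurring strictly inside
corresponds to cutting the edge above that vertex. -/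
inductive CutShape : Type
  | full
  | branch : List CutShape → CutShape

namespace CK

/-- Number of vertices of a forest. -/
def sizeL : List RTree → ℕ
  | [] => 0
  | .node l :: ts => 1 + sizeL l + sizeL ts

/-- All admissible cuts of a forest (a choice of admissible cut of each tree). -/
def cutsF : List RTree → List (List CutShape)
  | [] => [[]]
  | .node l :: ts =>
      (CutShape.full :: (cutsF l).map CutShape.branch).flatMap
        fun c => (cutsF ts).map (c :: ·)

/-- The root part `R_C(F)` of a cut. -/
def Rcut : List RTree → List CutShape → List RTree
  | [], _ => []
  | _ :: _, [] => []
  | .node _ :: ts, .full :: cs => Rcut ts cs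
  | .node l :: ts, .branch ds :: cs => RTree.node (Rcut l ds) :: Rcut ts cs

/-- The pruned part `P_C(F)` of a cut. -/
def Pcut : List RTree → List CutShape → List RTree
  | [], _ => []
  | _ :: _, [] => []
  | .node l :: ts, .full :: cs => RTree.node l :: Pcut ts cs
  | .node l :: ts, .branch ds :: cs => Pcut l ds ++ Pcut ts cs

/-- Number of `full`s occurring in a cut. -/
def fullsL : List CutShape → ℕ
  | [] => 0
  | .full :: cs => 1 + fullsL cs
  | .branch ds :: cs => fullsL ds + fullsL cs

/-- A list of concrete forests containing (representatives of) every forest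
with at most `n` vertices. -/
def forestsUpTo : ℕ → List (List RTree)
  | 0 => [[]]
  | n+1 => [] :: (forestsUpTo n).flatMap fun l => (forestsUpTo n).map fun F => RTree.node l :: F

/-- Isomorphism of rooted trees (non-planar): a root-preserving bijection, i.e.
the lists of subtrees agree up to permutation and isomorphism. -/
inductive Iso : RTree → RTree → Prop
  | node {l₁ l l₂ : List RTree} : List.Forall₂ Iso l₁ l → l.Perm l₂ → Iso (.node l₁) (.node l₂)

/-- Isomorphism classes of rooted trees. -/
abbrev TreeClass : Type := Quot Iso

/-- Isomorphism classes of rooted forests = multisets of tree classes.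
The empty forest is `0`. -/
abbrev ForestClass : Type := Multiset TreeClass

/-- Isomorphism class of a tree. -/
def clT (t : RTree) : TreeClass := Quot.mk _ t

/-- Isomorphism class of a forest. -/
def clF (F : List RTree) : ForestClass := (F.map clT : List TreeClass)

/-- A concrete representative of a forest class. -/
noncomputable def repF (M : ForestClass) : List RTree := M.toList.map Quot.out

/-- A concrete representative of a tree class. -/
noncomputable def repT (T : TreeClass) : RTree := T.out

/-- Number of vertices of a forest class. -/
noncomputable def sizeC (M : ForestClass) : ℕ := sizeL (repF M)

/-- Number of vertices of a tree class. -/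
noncomputable def sizeT (T : TreeClass) : ℕ := sizeL [repT T]

/-- The Hall algebra `H`: finitely supported ℚ-valued functions on
isomorphism classes of rooted forests, with basis the delta functions. -/
abbrev H : Type := ForestClass →₀ ℚ

/-- The basis element `δ_A` of `H`. -/
noncomputable def delta (A : ForestClass) : H := Finsupp.single A 1

/-- `n(A,B;M)`: the number of admissible cuts `C` of `M` with
`P_C(M) ≅ A` and `R_C(M) ≅ B`. -/
noncomputable def nCuts (A B M : ForestClass) : ℕ :=
  (cutsF (repF M)).countP fun c =>
    decide (clF (Pcut (repF M) c) = A ∧ clF (Rcut (repF M) c) = B)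

/-- A finite set of forest classes containing all classes with at most `n`
vertices. -/
noncomputable def forestCand (n : ℕ) : Finset ForestClass :=
  ((forestsUpTo n).map clF).toFinset

/-- A finite set of tree classes containing all classes with at most `n+1`
vertices. -/
noncomputable def treeCand (n : ℕ) : Finset TreeClass :=
  ((forestsUpTo n).map fun F => clT (RTree.node F)).toFinset

/-- The Hall product on basis elements: `δ_A × δ_B = Σ_M n(A,B;M)·δ_M`
(every `M` with `n(A,B;M) ≠ 0` has exactly `sizeC A + sizeC B` vertices). -/
noncomputable def mulBasis (A B : ForestClass) : H :=
  ∑ M ∈ forestCand (sizeC A + sizeC B), (nCuts A B M : ℚ) • delta M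

/-- The Hall product on `H`, extended bilinearly from basis elements. -/
noncomputable def hmul (f g : H) : H :=
  f.sum fun A a => g.sum fun B b => (a * b) • mulBasis A B

/-- The Connes-Kreimer Lie algebra `n_T` (as a vector space): the span of
isomorphism classes of rooted trees. -/
abbrev nT : Type := TreeClass →₀ ℚ

/-- The basis element of `n_T` corresponding to a rooted tree `T`. -/
noncomputable def tau (T : TreeClass) : nT := Finsupp.single T 1

/-- `a(T₁,T₂;T)`: the number of edges `e` of `T` such that the single-edge cut
at `e` has pruned part `≅ T₁` and root part `≅ T₂`. -/
noncomputable def aCount (T₁ T₂ T : TreeClass) : ℕ :=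
  (cutsF [repT T]).countP fun c =>
    decide (fullsL c = 1 ∧ clF (Pcut [repT T] c) = ({T₁} : Multiset TreeClass)
      ∧ clF (Rcut [repT T] c) = ({T₂} : Multiset TreeClass))

/-- The grafting (pre-Lie) product on basis elements:
`T₁ * T₂ = Σ_T a(T₁,T₂;T)·T`. -/
noncomputable def graftBasis (T₁ T₂ : TreeClass) : nT :=
  ∑ T ∈ treeCand (sizeT T₁ + sizeT T₂), (aCount T₁ T₂ T : ℚ) • tau T

/-- The grafting (pre-Lie) product on `n_T`, extended bilinearly. -/
noncomputable def graft (x y : nT) : nT :=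
  x.sum fun T₁ a => y.sum fun T₂ b => (a * b) • graftBasis T₁ T₂

/-- The Connes-Kreimer bracket `[x,y] = x*y - y*x` on `n_T`. -/
noncomputable def ckBracket (x y : nT) : nT := graft x y - graft y x

/-- `Ẽ_A δ_B = Σ_C δ_{R_C(B)}`, the sum over admissible cuts `C` of `B` with
`P_C(B) ≅ A`. -/
noncomputable def elimBasis (A B : ForestClass) : H :=
  (((cutsF (repF B)).filter fun c => decide (clF (Pcut (repF B) c) = A)).map
    fun c => delta (clF (Rcut (repF B) c))).sum

/-- The elimination operator `E_A` (here on `H ≅ H*`, identifying `φ_B` with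
`δ_B`). -/
noncomputable def elim (A : ForestClass) : H →ₗ[ℚ] H :=
  Finsupp.lsum ℚ fun B => LinearMap.toSpanSingleton ℚ H (elimBasis A B)

/-- `Ẽ^top_A δ_B = Σ_C δ_{P_C(B)}`, the sum over admissible cuts `C` of `B`
with `R_C(B) ≅ A`. -/
noncomputable def topElimBasis (A B : ForestClass) : H :=
  (((cutsF (repF B)).filter fun c => decide (clF (Rcut (repF B) c) = A)).map
    fun c => delta (clF (Pcut (repF B) c))).sum

/-- The top-elimination operator `E^top_A`. -/
noncomputable def topElim (A : ForestClass) : H →ₗ[ℚ] H :=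
  Finsupp.lsum ℚ fun B => LinearMap.toSpanSingleton ℚ H (topElimBasis A B)

/-- `H ⊗ H`, realized as finitely supported functions on pairs of classes. -/
abbrev H2 : Type := (ForestClass × ForestClass) →₀ ℚ

/-- `Δ(δ_M) = Σ δ_A ⊗ δ_B`, the sum over ordered pairs `(A,B)` of classes with
`A ⊔ B ≅ M`. -/
noncomputable def deltaBasis (M : ForestClass) : H2 :=
  ∑ A ∈ M.powerset.toFinset, Finsupp.single (A, M - A) 1

/-- The coproduct `Δ : H → H ⊗ H`. -/
noncomputable def coprod : H →ₗ[ℚ] H2 :=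
  Finsupp.lsum ℚ fun M => LinearMap.toSpanSingleton ℚ H2 (deltaBasis M)

/-- `H_quot(M)`: the subspace of `H* ≅ H` spanned by
`{φ_{R_C(M)} : C an admissible cut of M}` (the quotients of `M`). -/
noncomputable def Hquot (M : ForestClass) : Submodule ℚ H :=
  Submodule.span ℚ
    {v : H | ∃ c ∈ cutsF (repF M), v = delta (clF (Rcut (repF M) c))}

/-! ### Basic lemmas on cuts -/

lemma mem_cutsF_nil {c : List CutShape} : c ∈ cutsF [] ↔ c = [] := by
  simp [cutsF]

lemma mem_cutsF_cons {l : List RTree} {ts : List RTree} {c : List CutShape} :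
    c ∈ cutsF (.node l :: ts) ↔
      ∃ d cs, (d = .full ∨ ∃ ds ∈ cutsF l, d = .branch ds) ∧ cs ∈ cutsF ts ∧ c = d :: cs := by
  simp only [cutsF, List.mem_flatMap, List.mem_cons, List.mem_map]
  constructor
  · rintro ⟨d, hd | ⟨ds, hds, rfl⟩, cs, hcs, rfl⟩
    · exact ⟨d, cs, Or.inl hd, hcs, rfl⟩
    · exact ⟨_, cs, Or.inr ⟨ds, hds, rfl⟩, hcs, rfl⟩
  · rintro ⟨d, cs, hd | ⟨ds, hds, rfl⟩, hcs, rfl⟩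
    · exact ⟨d, Or.inl hd, cs, hcs, rfl⟩
    · exact ⟨_, Or.inr ⟨ds, hds, rfl⟩, cs, hcs, rfl⟩

lemma length_of_mem_cutsF : ∀ {F : List RTree} {c : List CutShape},
    c ∈ cutsF F → c.length = F.length
  | [], c, h => by simp_all [mem_cutsF_nil]
  | .node l :: ts, c, h => by
    obtain ⟨d, cs, _, hcs, rfl⟩ := mem_cutsF_cons.mp h
    simp [length_of_mem_cutsF hcs]

lemma mem_cutsF_append : ∀ {F₁ F₂ : List RTree} {c : List CutShape},
    c ∈ cutsF (F₁ ++ F₂) ↔ ∃ a b, a ∈ cutsF F₁ ∧ b ∈ cutsF F₂ ∧ c = a ++ b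
  | [], F₂, c => by simp [mem_cutsF_nil]
  | .node l :: ts, F₂, c => by
    rw [List.cons_append, mem_cutsF_cons]
    constructor
    · rintro ⟨d, cs, hd, hcs, rfl⟩
      obtain ⟨a, b, ha, hb, rfl⟩ := mem_cutsF_append.mp hcs
      exact ⟨d :: a, b, mem_cutsF_cons.mpr ⟨d, a, hd, ha, rfl⟩, hb, rfl⟩
    · rintro ⟨a, b, ha, hb, rfl⟩
      obtain ⟨d, cs, hd, hcs, rfl⟩ := mem_cutsF_cons.mp ha
      exact ⟨d, cs ++ b, hd, mem_cutsF_append.mpr ⟨cs, b, hcs, hb, rfl⟩, rfl⟩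

lemma Rcut_append : ∀ {F₁ : List RTree} {a : List CutShape} (F₂ : List RTree)
    (b : List CutShape), a.length = F₁.length →
    Rcut (F₁ ++ F₂) (a ++ b) = Rcut F₁ a ++ Rcut F₂ b
  | [], a, F₂, b, h => by
    rw [List.length_eq_zero_iff.mp h]; simp [Rcut]
  | .node l :: ts, a, F₂, b, h => by
    match a with
    | [] => simp at h
    | .full :: a' =>
      simp only [List.cons_append, Rcut]
      exact Rcut_append F₂ b (by simpa using h)
    | .branch ds :: a' =>
      simp only [List.cons_append, Rcut, List.cons_inj_right]
      exact Rcut_append F₂ b (by simpa using h)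
/-! ### Iso is an equivalence -/

lemma sizeL_mem_le {x : RTree} : ∀ {l : List RTree}, x ∈ l → sizeL [x] ≤ sizeL l
  | .node m :: ts, h => by
    rcases List.mem_cons.mp h with rfl | h
    · simp [sizeL]
    · calc sizeL [x] ≤ sizeL ts := sizeL_mem_le h
        _ ≤ sizeL (.node m :: ts) := by simp only [sizeL]; omega

lemma forall₂_flip' {α : Type*} {R : α → α → Prop} :
    ∀ {l m : List α}, List.Forall₂ R l m → List.Forall₂ (flip R) m l
  | _, _, .nil => .nil
  | _, _, .cons h t => .cons h (forall₂_flip' t)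

lemma forall₂_perm_left {α β : Type*} {R : α → β → Prop} {l₁ l₁' : List α} (p : l₁.Perm l₁') :
    ∀ {l₂ : List β}, List.Forall₂ R l₁ l₂ → ∃ l₂', List.Forall₂ R l₁' l₂' ∧ l₂.Perm l₂' := by
  induction p with
  | nil => intro l₂ h; cases h; exact ⟨[], .nil, .nil⟩
  | cons x p ih =>
    intro l₂ h
    cases h with
    | cons hxy h =>
      obtain ⟨l₂', h', p'⟩ := ih h
      exact ⟨_, .cons hxy h', p'.cons _⟩
  | swap x y l =>
    intro l₂ h
    cases h with
    | cons h1 h =>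
      cases h with
      | cons h2 h => exact ⟨_, .cons h2 (.cons h1 h), .swap _ _ _⟩
  | trans _ _ ih₁ ih₂ =>
    intro l₂ h
    obtain ⟨m, hm, pm⟩ := ih₁ h
    obtain ⟨m', hm', pm'⟩ := ih₂ hm
    exact ⟨m', hm', pm.trans pm'⟩

lemma forall₂_imp_mem {α : Type*} {R S : α → α → Prop} :
    ∀ {l m : List α}, List.Forall₂ R l m → (∀ a ∈ l, ∀ b ∈ m, R a b → S a b) →
      List.Forall₂ S l m
  | _, _, .nil, _ => .nil
  | _, _, .cons h t, H =>
    .cons (H _ (by simp) _ (by simp) h)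
      (forall₂_imp_mem t fun a ha b hb hr => H a (by simp [ha]) b (by simp [hb]) hr)

lemma forall₂_trans_mem {α : Type*} {R : α → α → Prop} :
    ∀ {l m n : List α}, List.Forall₂ R l m → List.Forall₂ R m n →
      (∀ a ∈ l, ∀ b c, R a b → R b c → R a c) → List.Forall₂ R l n
  | _, _, _, .nil, .nil, _ => .nil
  | _, _, _, .cons h1 t1, .cons h2 t2, H =>
    .cons (H _ (by simp) _ _ h1 h2)
      (forall₂_trans_mem t1 t2 fun a ha => H a (by simp [ha]))

lemma iso_refl (t : RTree) : Iso t t := by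
  suffices h : ∀ n t, sizeL [t] ≤ n → Iso t t from h (sizeL [t]) t le_rfl
  intro n
  induction n with
  | zero => rintro ⟨l⟩ h; simp [sizeL] at h
  | succ n ih =>
    rintro ⟨l⟩ h
    refine Iso.node (l := l) (List.forall₂_same.mpr fun x hx => ih x ?_) (List.Perm.refl l)
    have := sizeL_mem_le hx
    simp [sizeL] at h
    omega

lemma iso_symm {a b : RTree} (hab : Iso a b) : Iso b a := by
  suffices h : ∀ n a b, sizeL [a] ≤ n → Iso a b → Iso b a from h (sizeL [a]) a b le_rfl hab
  clear hab a b
  intro n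
  induction n with
  | zero => rintro ⟨l⟩ b h; simp [sizeL] at h
  | succ n ih =>
    rintro ⟨l₁⟩ b hsz hab
    cases hab with
    | @node _ l l₂ h p =>
      obtain ⟨l₁', h', p'⟩ := forall₂_perm_left p (forall₂_flip' h)
      have hsub : List.Forall₂ Iso l₂ l₁' := by
        refine forall₂_imp_mem h' fun x hx y hy hr => ih y x ?_ hr
        have hy' : y ∈ l₁ := p'.symm.mem_iff.mp hy
        have := sizeL_mem_le hy'
        simp [sizeL] at hsz
        omega
      exact Iso.node hsub p'.symm

lemma iso_trans {a b c : RTree} (h1 : Iso a b) (h2 : Iso b c) : Iso a c := by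
  suffices h : ∀ n a b c, sizeL [a] ≤ n → Iso a b → Iso b c → Iso a c from
    h (sizeL [a]) a b c le_rfl h1 h2
  clear h1 h2 a b c
  intro n
  induction n with
  | zero => rintro ⟨l⟩ b c h; simp [sizeL] at h
  | succ n ih =>
    rintro ⟨l₁⟩ b c hsz h1 h2
    cases h1 with
    | @node _ l m₁ hf1 p1 =>
      cases h2 with
      | @node _ m n₂ hf2 p2 =>
        obtain ⟨m', hm', pm⟩ := forall₂_perm_left p1.symm hf2
        have hln : List.Forall₂ Iso l₁ m' := by
          refine forall₂_trans_mem hf1 hm' fun x hx y z hxy hyz => ih x y z ?_ hxy hyz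
          have := sizeL_mem_le hx
          simp [sizeL] at hsz
          omega
        exact Iso.node hln ((pm.symm.trans p2))
/-! ### Classes -/

lemma iso_equivalence : Equivalence Iso := ⟨iso_refl, iso_symm, iso_trans⟩

lemma clT_eq_iff {a b : RTree} : clT a = clT b ↔ Iso a b := by
  rw [clT, clT, Quot.eq]
  exact iso_equivalence.eqvGen_iff

lemma map_clT_eq_of_forall₂ : ∀ {l m : List RTree}, List.Forall₂ Iso l m →
    l.map clT = m.map clT
  | _, _, .nil => rfl
  | _, _, .cons h t => by
    simp only [List.map_cons, clT_eq_iff.mpr h, map_clT_eq_of_forall₂ t]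

lemma forall₂_of_map_clT_eq : ∀ {l m : List RTree}, l.map clT = m.map clT →
    List.Forall₂ Iso l m
  | [], [], _ => .nil
  | [], _ :: _, h => by simp at h
  | _ :: _, [], h => by simp at h
  | a :: l, b :: m, h => by
    simp only [List.map_cons, List.cons.injEq] at h
    exact .cons (clT_eq_iff.mp h.1) (forall₂_of_map_clT_eq h.2)

lemma clF_cons (t : RTree) (F : List RTree) : clF (t :: F) = clT t ::ₘ clF F := by
  simp [clF]

lemma clF_append (F G : List RTree) : clF (F ++ G) = clF F + clF G := by
  simp [clF]

lemma clF_nil : clF [] = 0 := rfl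

lemma map_clT_of_forall₂' : ∀ {Q : List TreeClass} {A : List RTree},
    List.Forall₂ (fun q a => clT a = q) Q A → A.map clT = Q
  | _, _, .nil => rfl
  | _, _, .cons h t => by simp only [List.map_cons, map_clT_of_forall₂' t, h]

lemma clF_eq_iff {A B : List RTree} : clF A = clF B ↔ Iso (.node A) (.node B) := by
  constructor
  · intro h
    have hp : (A.map clT).Perm (B.map clT) := by
      rwa [clF, clF, Multiset.coe_eq_coe] at h
    have hAA : List.Forall₂ (fun q a => clT a = q) (A.map clT) A := by
      clear h hp; induction A with
      | nil => exact .nil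
      | cons a l ih => exact .cons rfl ih
    obtain ⟨A', hA', pA⟩ := forall₂_perm_left hp hAA
    have hmap : A'.map clT = B.map clT := map_clT_of_forall₂' hA'
    have hIso : List.Forall₂ Iso A' B := forall₂_of_map_clT_eq hmap
    obtain ⟨B', hB', pB⟩ := forall₂_perm_left pA.symm hIso
    exact Iso.node hB' pB.symm
  · rintro (h : Iso (.node A) (.node B))
    cases h with
    | @node _ L _ hf p =>
      rw [clF, clF, map_clT_eq_of_forall₂ hf, Multiset.coe_eq_coe]
      exact p.map clT

lemma clF_repF (B : ForestClass) : clF (repF B) = B := by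
  rw [clF, repF, List.map_map]
  have : (clT ∘ Quot.out : TreeClass → TreeClass) = id := by
    funext x; exact Quot.out_eq x
  rw [this, List.map_id, Multiset.coe_toList]
/-! ### Invariance and composition of cuts -/

lemma clF_eq_zero {F : List RTree} (h : clF F = 0) : F = [] := by
  rw [clF, Multiset.coe_eq_zero, List.map_eq_nil_iff] at h
  exact h

lemma cut_inv : ∀ n (F G : List RTree), sizeL G ≤ n → clF F = clF G →
    ∀ c ∈ cutsF G, ∃ c' ∈ cutsF F, clF (Rcut F c') = clF (Rcut G c) := by
  intro n
  induction n with
  | zero =>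
    intro F G hsz hcl c hc
    match G with
    | [] =>
      rw [clF_eq_zero hcl] at *
      rw [mem_cutsF_nil] at hc
      exact ⟨[], mem_cutsF_nil.mpr rfl, by rw [hc]⟩
    | .node l :: ts => simp only [sizeL] at hsz; omega
  | succ n ih =>
    intro F G hsz hcl c hc
    match G with
    | [] =>
      rw [clF_eq_zero hcl] at *
      rw [mem_cutsF_nil] at hc
      exact ⟨[], mem_cutsF_nil.mpr rfl, by rw [hc]⟩
    | .node l₂ :: ts =>
      have hszl : sizeL l₂ ≤ n := by simp only [sizeL] at hsz; omega
      have hszts : sizeL ts ≤ n := by simp only [sizeL] at hsz; omega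
      have hmem : clT (.node l₂) ∈ clF F := by
        rw [hcl, clF_cons]; exact Multiset.mem_cons_self _ _
      rw [clF, Multiset.mem_coe, List.mem_map] at hmem
      obtain ⟨t, htF, hteq⟩ := hmem
      obtain ⟨F₁, F₂, rfl⟩ := List.append_of_mem htF
      obtain ⟨l₁⟩ := t
      have hcl12 : clF l₁ = clF l₂ := clF_eq_iff.mpr (clT_eq_iff.mp hteq)
      have hrest : clF (F₁ ++ F₂) = clF ts := by
        have h2 : clF F₁ + (clT (RTree.node l₁) ::ₘ clF F₂)
            = clT (RTree.node l₂) ::ₘ clF ts := by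
          rw [← clF_cons, ← clF_append, ← clF_cons, hcl]
        rw [hteq, Multiset.add_cons, Multiset.cons_inj_right] at h2
        rw [clF_append, h2]
      obtain ⟨d, cs, hd, hcs, rfl⟩ := mem_cutsF_cons.mp hc
      obtain ⟨c'', hc'', hR⟩ := ih (F₁ ++ F₂) ts hszts hrest cs hcs
      obtain ⟨a, b, ha, hb, rfl⟩ := mem_cutsF_append.mp hc''
      have hlena : a.length = F₁.length := length_of_mem_cutsF ha
      rw [Rcut_append _ _ hlena, clF_append] at hR
      rcases hd with rfl | ⟨ds, hds, rfl⟩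
      · refine ⟨a ++ .full :: b, mem_cutsF_append.mpr ⟨a, .full :: b, ha,
          mem_cutsF_cons.mpr ⟨.full, b, Or.inl rfl, hb, rfl⟩, rfl⟩, ?_⟩
        rw [Rcut_append _ _ hlena]
        simp only [Rcut, clF_append]
        exact hR
      · obtain ⟨ds', hds', hRl⟩ := ih l₁ l₂ hszl hcl12 ds hds
        refine ⟨a ++ .branch ds' :: b, mem_cutsF_append.mpr ⟨a, .branch ds' :: b, ha,
          mem_cutsF_cons.mpr ⟨.branch ds', b, Or.inr ⟨ds', hds', rfl⟩, hb, rfl⟩, rfl⟩, ?_⟩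
        rw [Rcut_append _ _ hlena]
        simp only [Rcut, clF_append, clF_cons]
        rw [clT_eq_iff.mpr (clF_eq_iff.mp hRl), Multiset.add_cons, hR]

lemma cut_comp : ∀ n (F : List RTree), sizeL F ≤ n → ∀ c ∈ cutsF F,
    ∀ c₂ ∈ cutsF (Rcut F c), ∃ c₃ ∈ cutsF F, Rcut F c₃ = Rcut (Rcut F c) c₂ := by
  intro n
  induction n with
  | zero =>
    intro F hsz c hc c₂ hc₂
    match F with
    | [] =>
      rw [mem_cutsF_nil] at hc
      subst hc
      exact ⟨[], mem_cutsF_nil.mpr rfl, by simp only [Rcut]⟩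
    | .node l :: ts => simp only [sizeL] at hsz; omega
  | succ n ih =>
    intro F hsz c hc c₂ hc₂
    match F with
    | [] =>
      rw [mem_cutsF_nil] at hc
      subst hc
      exact ⟨[], mem_cutsF_nil.mpr rfl, by simp only [Rcut]⟩
    | .node l :: ts =>
      have hszl : sizeL l ≤ n := by simp only [sizeL] at hsz; omega
      have hszts : sizeL ts ≤ n := by simp only [sizeL] at hsz; omega
      obtain ⟨d, cs, hd, hcs, rfl⟩ := mem_cutsF_cons.mp hc
      rcases hd with rfl | ⟨ds, hds, rfl⟩
      · simp only [Rcut] at hc₂ ⊢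
        obtain ⟨c₃, h₃, hR⟩ := ih ts hszts cs hcs c₂ hc₂
        exact ⟨.full :: c₃, mem_cutsF_cons.mpr ⟨.full, c₃, Or.inl rfl, h₃, rfl⟩,
          by simp only [Rcut]; exact hR⟩
      · simp only [Rcut] at hc₂ ⊢
        obtain ⟨d₂, cs₂, hd₂, hcs₂, rfl⟩ := mem_cutsF_cons.mp hc₂
        obtain ⟨c₃, h₃, hR⟩ := ih ts hszts cs hcs cs₂ hcs₂
        rcases hd₂ with rfl | ⟨ds₂, hds₂, rfl⟩
        · exact ⟨.full :: c₃, mem_cutsF_cons.mpr ⟨.full, c₃, Or.inl rfl, h₃, rfl⟩,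
            by simp only [Rcut]; exact hR⟩
        · obtain ⟨ds₃, h₃', hRl⟩ := ih l hszl ds hds ds₂ hds₂
          refine ⟨.branch ds₃ :: c₃,
            mem_cutsF_cons.mpr ⟨.branch ds₃, c₃, Or.inr ⟨ds₃, h₃', rfl⟩, h₃, rfl⟩, ?_⟩
          simp only [Rcut, hRl, hR]
/-! ### Main theorem -/

lemma elimBasis_mem (M : ForestClass) (A : ForestClass) {c : List CutShape}
    (hc : c ∈ cutsF (repF M)) :
    elimBasis A (clF (Rcut (repF M) c)) ∈ Hquot M := by
  set B : ForestClass := clF (Rcut (repF M) c) with hB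
  rw [elimBasis]
  refine list_sum_mem fun x hx => ?_
  rw [List.mem_map] at hx
  obtain ⟨c', hc', rfl⟩ := hx
  rw [List.mem_filter] at hc'
  have hc'' : c' ∈ cutsF (repF B) := hc'.1
  have hclB : clF (Rcut (repF M) c) = clF (repF B) := by rw [clF_repF, hB]
  obtain ⟨c₂, hc₂, he₂⟩ :=
    cut_inv (sizeL (repF B)) (Rcut (repF M) c) (repF B) le_rfl hclB c' hc''
  obtain ⟨c₃, hc₃, he₃⟩ := cut_comp (sizeL (repF M)) (repF M) le_rfl c hc c₂ hc₂
  have : delta (clF (Rcut (repF B) c')) = delta (clF (Rcut (repF M) c₃)) := by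
    rw [he₃, he₂]
  rw [this]
  exact Submodule.subset_span ⟨c₃, hc₃, rfl⟩

theorem Hquot_findim_stable' (M : ForestClass) :
    FiniteDimensional ℚ (Hquot M) ∧
    Module.finrank ℚ (Hquot M) ≤ (cutsF (repF M)).length ∧
    ∀ A : ForestClass, ∀ w ∈ Hquot M, elim A w ∈ Hquot M := by
  set f : List CutShape → H := fun c => delta (clF (Rcut (repF M) c)) with hf
  set s : Finset H := ((cutsF (repF M)).map f).toFinset with hs
  have hEq : Hquot M = Submodule.span ℚ (s : Set H) := by
    rw [Hquot]
    congr 1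
    ext v
    simp only [hs, Set.mem_setOf_eq, List.coe_toFinset, Set.mem_setOf_eq, List.mem_map, hf]
    constructor
    · rintro ⟨c, hc, rfl⟩; exact ⟨c, hc, rfl⟩
    · rintro ⟨c, hc, rfl⟩; exact ⟨c, hc, rfl⟩
  refine ⟨?_, ?_, ?_⟩
  · rw [hEq]
    exact FiniteDimensional.span_of_finite ℚ s.finite_toSet
  · rw [hEq]
    refine le_trans (finrank_span_finset_le_card s) ?_
    calc s.card ≤ ((cutsF (repF M)).map f).length := List.toFinset_card_le _
      _ = (cutsF (repF M)).length := List.length_map _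
  · intro A w hw
    refine Submodule.span_induction (p := fun x _ => elim A x ∈ Hquot M) ?_ ?_ ?_ ?_ hw
    · rintro x ⟨c, hc, rfl⟩
      have hcompute : elim A (delta (clF (Rcut (repF M) c)))
          = elimBasis A (clF (Rcut (repF M) c)) := by
        rw [elim, delta, Finsupp.lsum_single, LinearMap.toSpanSingleton_apply_one]
      rw [hcompute]
      exact elimBasis_mem M A hc
    · simp only [map_zero]; exact Submodule.zero_mem _
    · intro x y _ _ hx hy; rw [map_add]; exact Submodule.add_mem _ hx hy
    · intro a x _ hx; rw [map_smul]; exact Submodule.smul_mem _ _ hx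

/-- STATEMENT 13: for every rooted forest `M`, the subspace `H_quot(M)` is
finite-dimensional of dimension at most the number of admissible cuts of `M`,
and is stable under every elimination operator `E_A`.  Hence it is a
finite-dimensional representation of `n_T` under the elimination action. -/
theorem Hquot_findim_stable (M : ForestClass) :
    FiniteDimensional ℚ (Hquot M) ∧
    Module.finrank ℚ (Hquot M) ≤ (cutsF (repF M)).length ∧
    ∀ A : ForestClass, ∀ w ∈ Hquot M, elim A w ∈ Hquot M := by
  exact Hquot_findim_stable' M

end CK
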